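/- arXiv:2508.05317 — 7 statements merged into one kernel-verified Lean document; each statement's English description precedes it below -/
import Mathlib

section
/- For any F_2F_4-additive code C of length n = α + β, the image of the dual under the map W is contained in the Euclidean dual of the image: W(C^⊥) ⊆ (W(C))^⊥. -/
abbrev F4 : Type := GaloisField 2 2

/-- The inner product `⟨u,v⟩₄ = ω·Σ aᵢcᵢ + Σ bⱼdⱼ` on `F_2^α × F_4^β`. -/
noncomputable def inner4 {α β : ℕ} (ω : F4)
    (u v : (Fin α → ZMod 2) × (Fin β → F4)) : F4 :=
  ω * ∑ i, algebraMap (ZMod 2) F4 (u.1 i * v.1 i) + ∑ j, u.2 j * v.2 j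

/-- Euclidean inner product on `F_2^(α+2β) = F_2^α × F_2^β × F_2^β`. -/
def euclid2 {α β : ℕ}
    (x y : (Fin α → ZMod 2) × (Fin β → ZMod 2) × (Fin β → ZMod 2)) : ZMod 2 :=
  ∑ i, x.1 i * y.1 i + ∑ j, x.2.1 j * y.2.1 j + ∑ j, x.2.2 j * y.2.2 j

lemma F4_two_eq_zero : (2 : F4) = 0 := by exact_mod_cast CharP.cast_eq_zero F4 2

lemma omega_ne (ω : F4) (hω : ω ^ 2 + ω + 1 = 0) :
    ∀ x : ZMod 2, ω ≠ algebraMap (ZMod 2) F4 x := by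
  have h2 := F4_two_eq_zero
  intro x hx
  have hx01 : ∀ y : ZMod 2, y = 0 ∨ y = 1 := by decide
  rcases hx01 x with h | h
  · subst h
    simp only [map_zero] at hx
    subst hx
    simp at hω
  · subst h
    simp only [map_one] at hx
    subst hx
    have : (1 : F4) = 0 := by linear_combination hω - 2 * h2 + h2
    exact one_ne_zero this

lemma F4_decomp (ω : F4) (hω : ω ^ 2 + ω + 1 = 0) (x : F4) :
    ∃ b q : ZMod 2, x = algebraMap (ZMod 2) F4 b + ω * algebraMap (ZMod 2) F4 q := by
  set f : ZMod 2 × ZMod 2 → F4 :=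
    fun bq => algebraMap (ZMod 2) F4 bq.1 + ω * algebraMap (ZMod 2) F4 bq.2 with hf
  have hinj : Function.Injective f := by
    rintro ⟨b, q⟩ ⟨b', q'⟩ h
    simp only [hf] at h
    by_cases hq : q = q'
    · subst hq
      have : algebraMap (ZMod 2) F4 b = algebraMap (ZMod 2) F4 b' := by
        have := add_right_cancel h
        exact this
      have hb := (algebraMap (ZMod 2) F4).injective this
      exact Prod.ext hb rfl
    · exfalso
      have hqq : q - q' = 1 := by
        have : ∀ y : ZMod 2, y ≠ 0 → y = 1 := by decide
        exact this _ (sub_ne_zero.mpr hq)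
      have : ω * algebraMap (ZMod 2) F4 (q - q') = algebraMap (ZMod 2) F4 (b' - b) := by
        simp only [map_sub]
        linear_combination h
      rw [hqq, map_one, mul_one] at this
      exact omega_ne ω hω (b' - b) this
  have hsurj : Function.Surjective f := by
    have hcard : Nat.card (ZMod 2 × ZMod 2) = Nat.card F4 := by
      rw [GaloisField.card 2 2 (by norm_num)]
      simp [Nat.card_eq_fintype_card]
    exact ((Nat.bijective_iff_injective_and_card f).2 ⟨hinj, hcard⟩).2
  obtain ⟨⟨b, q⟩, hbq⟩ := hsurj x
  exact ⟨b, q, hbq.symm⟩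

/-- For any `F_2F_4`-additive code `C`, the image of the dual under the
linear bijection `W` is contained in the Euclidean dual of the image:
`W(C^⊥) ⊆ (W(C))^⊥`. -/
theorem stmt_5 (α β : ℕ) (ω : F4) (hω : ω ^ 2 + ω + 1 = 0)
    (C : AddSubgroup ((Fin α → ZMod 2) × (Fin β → F4)))
    (W : ((Fin α → ZMod 2) × (Fin β → F4)) →ₗ[ZMod 2]
        ((Fin α → ZMod 2) × (Fin β → ZMod 2) × (Fin β → ZMod 2)))
    (hWbij : Function.Bijective W)
    (hW : ∀ (a : Fin α → ZMod 2) (b q : Fin β → ZMod 2),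
      W (a, fun j => algebraMap (ZMod 2) F4 (b j) + ω * algebraMap (ZMod 2) F4 (q j))
        = (a, b + q, q)) :
    ∀ v, (∀ u ∈ C, inner4 ω v u = 0) →
      ∀ u ∈ C, euclid2 (W v) (W u) = 0 := by
  have h2 := F4_two_eq_zero
  set A := algebraMap (ZMod 2) F4 with hA
  intro v hv u hu
  -- decompose v and u
  choose b q hbq using fun j => F4_decomp ω hω (v.2 j)
  choose d r hdr using fun j => F4_decomp ω hω (u.2 j)
  have hveq : v = (v.1, fun j => A (b j) + ω * A (q j)) := by
    refine Prod.ext rfl (funext fun j => ?_)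
    exact hbq j
  have hueq : u = (u.1, fun j => A (d j) + ω * A (r j)) := by
    refine Prod.ext rfl (funext fun j => ?_)
    exact hdr j
  have hWv : W v = (v.1, b + q, q) := by
    conv_lhs => rw [hveq]
    exact hW v.1 b q
  have hWu : W u = (u.1, d + r, r) := by
    conv_lhs => rw [hueq]
    exact hW u.1 d r
  -- the key inner-product computation
  have hinner := hv u hu
  set S1 : ZMod 2 := ∑ j, (b j * d j + q j * r j) with hS1def
  set S2 : ZMod 2 := (∑ i, v.1 i * u.1 i) + ∑ j, (b j * r j + q j * d j + q j * r j)
    with hS2def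
  have hexp : inner4 ω v u = A S1 + ω * A S2 := by
    rw [inner4, hS1def, hS2def]
    have hterm : ∀ j, v.2 j * u.2 j
        = A (b j * d j + q j * r j) + ω * A (b j * r j + q j * d j + q j * r j) := by
      intro j
      rw [hbq j, hdr j]
      simp only [map_add, map_mul]
      linear_combination (A (q j) * A (r j)) * hω - ((ω + 1) * A (q j) * A (r j)) * h2
    rw [Finset.sum_congr rfl (fun j _ => hterm j)]
    rw [Finset.sum_add_distrib, ← Finset.mul_sum, ← map_sum, ← map_sum, ← map_sum]
    simp only [map_sum, map_add, map_mul]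
    ring
  rw [hexp] at hinner
  -- extract the two components
  have hS2 : S2 = 0 := by
    by_contra hS2ne
    have : S2 = 1 := by
      have : ∀ y : ZMod 2, y ≠ 0 → y = 1 := by decide
      exact this _ hS2ne
    rw [this, map_one, mul_one] at hinner
    have : ω = A (-S1) := by rw [map_neg]; linear_combination hinner
    exact omega_ne ω hω (-S1) this
  have hS1 : S1 = 0 := by
    rw [hS2, map_zero, mul_zero, add_zero] at hinner
    exact (algebraMap (ZMod 2) F4).injective (by rw [hinner, map_zero])
  -- conclude
  rw [hWv, hWu, euclid2]
  have hβ : (∑ j, (b + q) j * (d + r) j) + ∑ j, q j * r j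
      = (∑ j, (b j * d j + q j * r j)) + ∑ j, (b j * r j + q j * d j + q j * r j) := by
    rw [← Finset.sum_add_distrib, ← Finset.sum_add_distrib]
    refine Finset.sum_congr rfl fun j _ => ?_
    simp only [Pi.add_apply]
    ring
  rw [hS1def] at hS1
  rw [hS2def] at hS2
  linear_combination hS1 + hS2 + hβ
end

section
/- There exists an F_2F_4-additive code C (with α = β = 2, generated by (1,1|ω,1) and (0,1|ω²,ω)) for which W(C^⊥) is a proper subset of (W(C))^⊥; in particular W(C^⊥) has 4 elements while (W(C))^⊥ has 16 elements. -/
/-- Euclidean dual of a subset of `F_2^(α+2β) = F_2^α × F_2^β × F_2^β`. -/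
def binDual {α β : ℕ}
    (S : Set ((Fin α → ZMod 2) × (Fin β → ZMod 2) × (Fin β → ZMod 2))) :
    Set ((Fin α → ZMod 2) × (Fin β → ZMod 2) × (Fin β → ZMod 2)) :=
  {y | ∀ x ∈ S, ∑ i, y.1 i * x.1 i + ∑ j, y.2.1 j * x.2.1 j + ∑ j, y.2.2 j * x.2.2 j = 0}

namespace Stmt6Aux

noncomputable def am : ZMod 2 →+* F4 := algebraMap (ZMod 2) F4

lemma char2' : (2 : F4) = 0 := CharP.cast_eq_zero F4 2

lemma zmod2_cases (c : ZMod 2) : c = 0 ∨ c = 1 := by revert c; decide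

lemma indep (ω : F4) (hω : ω ^ 2 + ω + 1 = 0) (c d : ZMod 2) :
    am c + ω * am d = 0 ↔ c = 0 ∧ d = 0 := by
  rcases zmod2_cases c with rfl | rfl <;> rcases zmod2_cases d with rfl | rfl <;>
    simp only [am, map_zero, map_one, mul_zero, mul_one, add_zero, zero_add]
  · simp
  · constructor
    · intro h
      exfalso
      rw [h] at hω; norm_num at hω
    · rintro ⟨-, h'⟩; exact absurd h' one_ne_zero
  · constructor
    · intro h; exact absurd h one_ne_zero
    · rintro ⟨h, -⟩; exact absurd h one_ne_zero
  · constructor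
    · intro h
      exfalso
      have hz : ω = 1 := by linear_combination h - char2'
      rw [hz] at hω
      have h1 : (1 : F4) = 0 := by linear_combination hω - char2'
      exact one_ne_zero h1
    · rintro ⟨h, -⟩; exact absurd h one_ne_zero

lemma inner_g1 (ω : F4) (hω : ω ^ 2 + ω + 1 = 0) (a b q : Fin 2 → ZMod 2) :
    inner4 ω (a, fun j => am (b j) + ω * am (q j)) (![1, 1], ![ω, 1])
      = am (q 0 + b 1) + ω * am (a 0 + a 1 + b 0 + q 0 + q 1) := by
  simp only [inner4, Fin.sum_univ_two, Matrix.cons_val_zero, Matrix.cons_val_one,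
    Matrix.head_cons, map_add, map_mul, map_one, mul_one, am]
  linear_combination (algebraMap (ZMod 2) F4 (q 0)) * hω
    - (algebraMap (ZMod 2) F4 (q 0)) * (1 + ω) * char2'

lemma inner_g2 (ω : F4) (hω : ω ^ 2 + ω + 1 = 0) (a b q : Fin 2 → ZMod 2) :
    inner4 ω (a, fun j => am (b j) + ω * am (q j)) (![0, 1], ![ω ^ 2, ω])
      = am (b 0 + q 0 + q 1) + ω * am (a 1 + b 0 + b 1 + q 1) := by
  simp only [inner4, Fin.sum_univ_two, Matrix.cons_val_zero, Matrix.cons_val_one,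
    Matrix.head_cons, map_add, map_mul, map_one, map_zero, mul_one, mul_zero, am]
  linear_combination (algebraMap (ZMod 2) F4 (b 0) + algebraMap (ZMod 2) F4 (q 1)
      + algebraMap (ZMod 2) F4 (q 0) * (ω - 1)) * hω
    - (algebraMap (ZMod 2) F4 (b 0) + algebraMap (ZMod 2) F4 (q 1)) * (ω + 1) * char2'

abbrev V : Type := (Fin 2 → ZMod 2) × (Fin 2 → F4)

abbrev B6 : Type := (Fin 2 → ZMod 2) × (Fin 2 → ZMod 2) × (Fin 2 → ZMod 2)

/-- inner4 is additive in the second argument. -/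
lemma inner4_add (ω : F4) (v u u' : V) :
    inner4 ω v (u + u') = inner4 ω v u + inner4 ω v u' := by
  simp only [inner4, Prod.fst_add, Prod.snd_add, Pi.add_apply, mul_add, map_add,
    Finset.sum_add_distrib]
  ring

lemma inner4_zero (ω : F4) (v : V) : inner4 ω v 0 = 0 := by
  simp [inner4]

lemma inner4_neg (ω : F4) (v u : V) : inner4 ω v (-u) = - inner4 ω v u := by
  simp only [inner4, Prod.fst_neg, Prod.snd_neg, Pi.neg_apply, mul_neg, map_neg,
    Finset.sum_neg_distrib]
  ring

def pair (y x : B6) : ZMod 2 :=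
  ∑ i, y.1 i * x.1 i + ∑ j, y.2.1 j * x.2.1 j + ∑ j, y.2.2 j * x.2.2 j

lemma pair_add (y x x' : B6) : pair y (x + x') = pair y x + pair y x' := by
  simp only [pair, Prod.fst_add, Prod.snd_add, Pi.add_apply, mul_add,
    Finset.sum_add_distrib]
  ring

lemma pair_zero (y : B6) : pair y 0 = 0 := by simp [pair]

lemma pair_neg (y x : B6) : pair y (-x) = - pair y x := by
  simp only [pair, Prod.fst_neg, Prod.snd_neg, Pi.neg_apply, mul_neg, map_neg,
    Finset.sum_neg_distrib]
  ring

def Tset : Finset B6 :=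
  Finset.univ.filter (fun p =>
    (p.2.2 0 + p.2.1 1 = 0 ∧ p.1 0 + p.1 1 + p.2.1 0 + p.2.2 0 + p.2.2 1 = 0) ∧
    (p.2.1 0 + p.2.2 0 + p.2.2 1 = 0 ∧ p.1 1 + p.2.1 0 + p.2.1 1 + p.2.2 1 = 0))

def Gmap : B6 → B6 := fun p => (p.1, p.2.1 + p.2.2, p.2.2)

def Dset : Finset B6 :=
  Finset.univ.filter (fun y =>
    y.1 0 + y.1 1 + y.2.1 0 + y.2.1 1 + y.2.2 0 = 0 ∧
    y.1 1 + y.2.1 1 + y.2.2 0 + y.2.2 1 = 0)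

lemma card_TG : (Tset.image Gmap).card = 4 := by decide
lemma card_D : Dset.card = 16 := by decide
lemma TG_ssub_D : Tset.image Gmap ⊂ Dset := by decide

/-- parametrization of V by bit-triples -/
noncomputable def E (ω : F4) : B6 → V :=
  fun p => (p.1, fun j => am (p.2.1 j) + ω * am (p.2.2 j))

lemma add_eq_zero_iff_eq (x y : ZMod 2) : x + y = 0 ↔ x = y := by revert x y; decide

lemma f_bijective (ω : F4) (hω : ω ^ 2 + ω + 1 = 0) :
    Function.Bijective (fun c : ZMod 2 × ZMod 2 => am c.1 + ω * am c.2) := by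
  rw [Nat.bijective_iff_injective_and_card]
  constructor
  · rintro ⟨c, d⟩ ⟨c', d'⟩ h
    simp only at h
    have h0 : am (c + c') + ω * am (d + d') = 0 := by
      simp only [am, map_add] at h ⊢
      linear_combination h + (algebraMap (ZMod 2) F4 c' + ω * algebraMap (ZMod 2) F4 d') * char2'
    rw [indep ω hω] at h0
    have hc := (add_eq_zero_iff_eq c c').mp h0.1
    have hd := (add_eq_zero_iff_eq d d').mp h0.2
    simp [hc, hd]
  · have : Nat.card F4 = 4 := by
      have := GaloisField.card 2 2 (by norm_num)
      simpa using this
    simp [Nat.card_prod, Nat.card_zmod, this]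


set_option maxHeartbeats 2000000 in
lemma main (ω : F4) (hω : ω ^ 2 + ω + 1 = 0)
    (W : V →ₗ[ZMod 2] B6)
    (hW : ∀ (a b q : Fin 2 → ZMod 2),
      W (a, fun j => algebraMap (ZMod 2) F4 (b j) + ω * algebraMap (ZMod 2) F4 (q j))
        = (a, b + q, q)) :
    (W '' {v : V | ∀ u ∈ AddSubgroup.closure {((![1, 1], ![ω, 1]) : V), (![0, 1], ![ω ^ 2, ω])},
        inner4 ω v u = 0}
      ⊂ binDual (W '' ((AddSubgroup.closure
          {((![1, 1], ![ω, 1]) : V), (![0, 1], ![ω ^ 2, ω])} : AddSubgroup V) : Set V))) ∧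
    (W '' {v : V | ∀ u ∈ AddSubgroup.closure {((![1, 1], ![ω, 1]) : V), (![0, 1], ![ω ^ 2, ω])},
        inner4 ω v u = 0}).ncard = 4 ∧
    (binDual (W '' ((AddSubgroup.closure
        {((![1, 1], ![ω, 1]) : V), (![0, 1], ![ω ^ 2, ω])} : AddSubgroup V) : Set V))).ncard
      = 16 := by
  set g1 : V := (![1, 1], ![ω, 1]) with hg1def
  set g2 : V := (![0, 1], ![ω ^ 2, ω]) with hg2def
  have hg1K : g1 ∈ AddSubgroup.closure {g1, g2} :=
    AddSubgroup.subset_closure (Set.mem_insert _ _)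
  have hg2K : g2 ∈ AddSubgroup.closure {g1, g2} :=
    AddSubgroup.subset_closure (Set.mem_insert_of_mem _ rfl)
  -- W on generators
  have hv1 : (fun j => algebraMap (ZMod 2) F4 ((![0, 1] : Fin 2 → ZMod 2) j)
      + ω * algebraMap (ZMod 2) F4 ((![1, 0] : Fin 2 → ZMod 2) j)) = ![ω, 1] := by
    funext j; fin_cases j <;> simp
  have hv2 : (fun j => algebraMap (ZMod 2) F4 ((![1, 0] : Fin 2 → ZMod 2) j)
      + ω * algebraMap (ZMod 2) F4 ((![1, 1] : Fin 2 → ZMod 2) j)) = ![ω ^ 2, ω] := by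
    funext j; fin_cases j
    · show algebraMap (ZMod 2) F4 1 + ω * algebraMap (ZMod 2) F4 1 = ω ^ 2
      rw [map_one]
      linear_combination -hω + (ω + 1) * char2'
    · simp
  have Wg1 : W g1 = (![1, 1], ![1, 1], ![1, 0]) := by
    rw [hg1def, ← hv1, hW, show (![0, 1] + ![1, 0] : Fin 2 → ZMod 2) = ![1, 1] by decide]
  have Wg2 : W g2 = (![0, 1], ![0, 1], ![1, 1]) := by
    rw [hg2def, ← hv2, hW, show (![1, 0] + ![1, 1] : Fin 2 → ZMod 2) = ![0, 1] by decide]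
  have pairWg1 : ∀ y : B6, pair y (![1, 1], ![1, 1], ![1, 0])
      = y.1 0 + y.1 1 + y.2.1 0 + y.2.1 1 + y.2.2 0 := by
    intro y; simp [pair, Fin.sum_univ_two]; ring
  have pairWg2 : ∀ y : B6, pair y (![0, 1], ![0, 1], ![1, 1])
      = y.1 1 + y.2.1 1 + y.2.2 0 + y.2.2 1 := by
    intro y; simp [pair, Fin.sum_univ_two]; ring
  -- Cperp as an image
  have hCperp : {v : V | ∀ u ∈ AddSubgroup.closure {g1, g2}, inner4 ω v u = 0}
      = E ω '' ↑Tset := by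
    ext v
    constructor
    · intro hv
      have hbq : ∀ j, ∃ c : ZMod 2 × ZMod 2, am c.1 + ω * am c.2 = v.2 j :=
        fun j => (f_bijective ω hω).2 (v.2 j)
      choose bq hbq using hbq
      have hv2' : v = E ω (v.1, fun j => (bq j).1, fun j => (bq j).2) :=
        Prod.ext rfl (by funext j; exact (hbq j).symm)
      have h1 := hv _ hg1K
      have h2 := hv _ hg2K
      rw [hv2'] at h1 h2
      rw [hg1def, show E ω (v.1, fun j => (bq j).1, fun j => (bq j).2)
          = (v.1, fun j => am ((bq j).1) + ω * am ((bq j).2)) from rfl,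
        inner_g1 ω hω, indep ω hω] at h1
      rw [hg2def, show E ω (v.1, fun j => (bq j).1, fun j => (bq j).2)
          = (v.1, fun j => am ((bq j).1) + ω * am ((bq j).2)) from rfl,
        inner_g2 ω hω, indep ω hω] at h2
      rw [hv2']
      refine Set.mem_image_of_mem _ ?_
      exact Finset.mem_coe.mpr (Finset.mem_filter.mpr
        ⟨Finset.mem_univ _, ⟨h1.1, h1.2⟩, ⟨h2.1, h2.2⟩⟩)
    · rintro ⟨p, hp, rfl⟩
      simp only [Finset.mem_coe, Tset, Finset.mem_filter] at hp
      intro u hu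
      induction hu using AddSubgroup.closure_induction with
      | mem x hx =>
        simp only [Set.mem_insert_iff, Set.mem_singleton_iff] at hx
        rcases hx with rfl | rfl
        · rw [hg1def, show E ω p = (p.1, fun j => am (p.2.1 j) + ω * am (p.2.2 j)) from rfl,
            inner_g1 ω hω, hp.2.1.1, hp.2.1.2]
          simp [am]
        · rw [hg2def, show E ω p = (p.1, fun j => am (p.2.1 j) + ω * am (p.2.2 j)) from rfl,
            inner_g2 ω hω, hp.2.2.1, hp.2.2.2]
          simp [am]
      | zero => exact inner4_zero ω _
      | add x y hx hy ihx ihy => rw [inner4_add, ihx, ihy, add_zero]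
      | neg x hx ihx => rw [inner4_neg, ihx, neg_zero]
  have hWCperp : W '' {v : V | ∀ u ∈ AddSubgroup.closure {g1, g2}, inner4 ω v u = 0}
      = ↑(Tset.image Gmap) := by
    rw [hCperp, Set.image_image, Finset.coe_image]
    exact Set.image_congr' (fun p : B6 => hW p.1 p.2.1 p.2.2)
  have hDual : binDual (W '' ((AddSubgroup.closure {g1, g2} : AddSubgroup V) : Set V))
      = ↑Dset := by
    ext y
    constructor
    · intro hy
      have h1 := hy (W g1) ⟨g1, hg1K, rfl⟩
      have h2 := hy (W g2) ⟨g2, hg2K, rfl⟩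
      rw [Wg1] at h1
      rw [Wg2] at h2
      refine Finset.mem_coe.mpr (Finset.mem_filter.mpr ⟨Finset.mem_univ _, ?_, ?_⟩)
      · rw [← pairWg1 y]; exact h1
      · rw [← pairWg2 y]; exact h2
    · intro hy
      simp only [Finset.mem_coe, Dset, Finset.mem_filter] at hy
      rintro x ⟨u, hu, rfl⟩
      show pair y (W u) = 0
      induction hu using AddSubgroup.closure_induction with
      | mem z hz =>
        simp only [Set.mem_insert_iff, Set.mem_singleton_iff] at hz
        rcases hz with rfl | rfl
        · rw [Wg1, pairWg1]; exact hy.2.1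
        · rw [Wg2, pairWg2]; exact hy.2.2
      | zero => rw [map_zero, pair_zero]
      | add a b ha hb iha ihb => rw [map_add, pair_add, iha, ihb, add_zero]
      | neg a ha iha => rw [map_neg, pair_neg, iha, neg_zero]
  refine ⟨?_, ?_, ?_⟩
  · rw [hWCperp, hDual]
    exact Finset.coe_ssubset.mpr TG_ssub_D
  · rw [hWCperp, Set.ncard_coe_finset]
    exact card_TG
  · rw [hDual, Set.ncard_coe_finset]
    exact card_D

end Stmt6Aux

/-- For the code `C` generated by `(1,1|ω,1)` and `(0,1|ω²,ω)` in `F_2² × F_4²`,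
the set `W(C^⊥)` is a proper subset of `(W(C))^⊥`: it has 4 elements while
`(W(C))^⊥` has 16 elements. -/
theorem stmt_6 (ω : F4) (hω : ω ^ 2 + ω + 1 = 0)
    (W : ((Fin 2 → ZMod 2) × (Fin 2 → F4)) →ₗ[ZMod 2]
        ((Fin 2 → ZMod 2) × (Fin 2 → ZMod 2) × (Fin 2 → ZMod 2)))
    (hWbij : Function.Bijective W)
    (hW : ∀ (a b q : Fin 2 → ZMod 2),
      W (a, fun j => algebraMap (ZMod 2) F4 (b j) + ω * algebraMap (ZMod 2) F4 (q j))
        = (a, b + q, q)) :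
    let C : AddSubgroup ((Fin 2 → ZMod 2) × (Fin 2 → F4)) :=
      AddSubgroup.closure {(![1, 1], ![ω, 1]), (![0, 1], ![ω ^ 2, ω])}
    let Cperp : Set ((Fin 2 → ZMod 2) × (Fin 2 → F4)) :=
      {v | ∀ u ∈ C, inner4 ω v u = 0}
    (W '' Cperp ⊂ binDual (W '' (C : Set ((Fin 2 → ZMod 2) × (Fin 2 → F4))))) ∧
    (W '' Cperp).ncard = 4 ∧
    (binDual (W '' (C : Set ((Fin 2 → ZMod 2) × (Fin 2 → F4))))).ncard = 16 := by
  intro C Cperp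
  exact Stmt6Aux.main ω hω W hW
end

section
/- Let C be an F_2F_4-additive code generated over F_2 by vectors V_1,…,V_l such that ⟨V_i,V_j⟩₄ ∈ F_2 for all i ≠ j and ⟨V_i,V_i⟩₄ ∉ F_2 for all i. Then C is an ACD code, i.e., C ∩ C^⊥ = {0}. -/
lemma inner4_add_left {α β : ℕ} (ω : F4) (u u' v : (Fin α → ZMod 2) × (Fin β → F4)) :
    inner4 ω (u + u') v = inner4 ω u v + inner4 ω u' v := by
  simp only [inner4, Prod.fst_add, Prod.snd_add, Pi.add_apply, add_mul, map_add,
    Finset.sum_add_distrib, mul_add]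
  ring

lemma inner4_smul_left {α β : ℕ} (ω : F4) (c : ZMod 2)
    (u v : (Fin α → ZMod 2) × (Fin β → F4)) :
    inner4 ω (c • u) v = algebraMap (ZMod 2) F4 c * inner4 ω u v := by
  simp only [inner4, Prod.smul_fst, Prod.smul_snd, Pi.smul_apply, smul_eq_mul]
  simp only [Algebra.smul_def, map_mul, mul_add, Finset.mul_sum]
  ring

noncomputable def inner4LM {α β : ℕ} (ω : F4) (w : (Fin α → ZMod 2) × (Fin β → F4)) :
    ((Fin α → ZMod 2) × (Fin β → F4)) →ₗ[ZMod 2] F4 where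
  toFun u := inner4 ω u w
  map_add' u u' := inner4_add_left ω u u' w
  map_smul' c u := by
    simp only [RingHom.id_apply]
    exact (inner4_smul_left ω c u w).trans (Algebra.smul_def c _).symm

/-- Case I of Theorem: if `⟨Vᵢ,Vⱼ⟩₄ ∈ F_2 = {0,1}` for `i ≠ j` and `⟨Vᵢ,Vᵢ⟩₄ ∉ F_2`, then the `F_2`-span `C` of the `Vᵢ` is an ACD code: `C ∩ C^⊥ = {0}`. -/
theorem stmt_8 (α β l : ℕ) (ω : F4) (hω : ω ^ 2 + ω + 1 = 0)
    (V : Fin l → (Fin α → ZMod 2) × (Fin β → F4))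
    (hoff : ∀ i j, i ≠ j → inner4 ω (V i) (V j) ∈ ({0, 1} : Set F4))
    (hdiag : ∀ i, inner4 ω (V i) (V i) ∉ ({0, 1} : Set F4)) :
    ∀ x ∈ Submodule.span (ZMod 2) (Set.range V),
      (∀ u ∈ Submodule.span (ZMod 2) (Set.range V), inner4 ω x u = 0) → x = 0 := by
  have h11 : (1 : F4) + 1 = 0 := by
    have h2 : (2 : F4) = 0 := CharP.cast_eq_zero F4 2
    linear_combination h2
  have hS : ∀ a b : F4, a ∈ ({0,1} : Set F4) → b ∈ ({0,1} : Set F4) →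
      a + b ∈ ({0,1} : Set F4) := by
    rintro a b (rfl|rfl) (rfl|rfl) <;> simp [h11]
  intro x hx h
  obtain ⟨c, hc⟩ := (Submodule.mem_span_range_iff_exists_fun _).mp hx
  have hc01 : ∀ a : ZMod 2, a ≠ 0 → a = 1 := by decide
  suffices hz : ∀ j, c j = 0 by
    rw [← hc]
    simp [hz]
  intro j
  by_contra hcj
  have hcj1 : c j = 1 := hc01 _ hcj
  have h0 : inner4 ω x (V j) = 0 :=
    h (V j) (Submodule.subset_span ⟨j, rfl⟩)
  have hexp : inner4 ω x (V j)
      = ∑ i, algebraMap (ZMod 2) F4 (c i) * inner4 ω (V i) (V j) := by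
    rw [← hc]
    have := map_sum (inner4LM ω (V j)) (fun i => c i • V i) Finset.univ
    simp only [inner4LM, LinearMap.coe_mk, AddHom.coe_mk] at this
    rw [this]
    exact Finset.sum_congr rfl fun i _ => inner4_smul_left ω (c i) (V i) (V j)
  have hsplit := Finset.add_sum_erase Finset.univ
    (fun i => algebraMap (ZMod 2) F4 (c i) * inner4 ω (V i) (V j)) (Finset.mem_univ j)
  have hrest : (∑ i ∈ Finset.univ.erase j,
      algebraMap (ZMod 2) F4 (c i) * inner4 ω (V i) (V j)) ∈ ({0,1} : Set F4) := by
    apply Finset.sum_induction _ (· ∈ ({0,1} : Set F4)) hS (by simp)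
    intro i hi
    have hij : i ≠ j := Finset.ne_of_mem_erase hi
    have h1 := hoff i j hij
    have h2 : algebraMap (ZMod 2) F4 (c i) ∈ ({0,1} : Set F4) := by
      have : c i = 0 ∨ c i = 1 := by
        have h01 : ∀ a : ZMod 2, a = 0 ∨ a = 1 := by decide
        exact h01 _
      rcases this with h | h <;> simp [h]
    rcases h2 with h2 | h2 <;> rcases h1 with h1 | h1 <;>
      simp_all
  rw [hexp, ← hsplit] at h0
  simp only [hcj1, map_one, one_mul] at h0
  apply hdiag j
  rcases hrest with hr | hr
  · rw [hr] at h0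
    left
    linear_combination h0
  · simp only [Set.mem_singleton_iff] at hr
    rw [hr] at h0
    right
    simp only [Set.mem_singleton_iff]
    linear_combination h0 - h11
end

section
/- Let C be an F_2F_4-additive code such that the punctured binary code C_X is LCD, the punctured quaternary code C_Y is self-orthogonal (C_Y ⊆ C_Y^⊥), and the binary part of every nonzero codeword of C is nonzero. Then C is an ACD code. -/
/-- If `C_X` is a binary LCD code, `C_Y` is self-orthogonal over `F_4`, and the
binary part of every nonzero codeword of `C` is nonzero, then `C` is ACD. -/
theorem stmt_11 (α β : ℕ) (ω : F4) (hω : ω ^ 2 + ω + 1 = 0)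
    (C : AddSubgroup ((Fin α → ZMod 2) × (Fin β → F4)))
    (hXlcd : ∀ a : Fin α → ZMod 2, (∃ b, (a, b) ∈ C) →
      (∀ a' : Fin α → ZMod 2, (∃ b', (a', b') ∈ C) → ∑ i, a i * a' i = 0) → a = 0)
    (hYso : ∀ b b' : Fin β → F4, (∃ a, (a, b) ∈ C) → (∃ a', (a', b') ∈ C) →
      ∑ j, b j * b' j = 0)
    (hbin : ∀ u ∈ C, u ≠ 0 → u.1 ≠ 0) :
    ∀ x ∈ C, (∀ u ∈ C, inner4 ω x u = 0) → x = 0 := by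
  intro x hx hperp
  have hωne : ω ≠ 0 := by
    intro h; rw [h] at hω; simp at hω
  have hX : x.1 = 0 := by
    apply hXlcd x.1 ⟨x.2, hx⟩
    intro a' ⟨b', hb'⟩
    have h1 : inner4 ω x (a', b') = 0 := hperp _ hb'
    have h2 : ∑ j, x.2 j * b' j = 0 := hYso x.2 b' ⟨x.1, hx⟩ ⟨a', hb'⟩
    unfold inner4 at h1
    rw [h2, add_zero, ← map_sum] at h1
    rcases mul_eq_zero.mp h1 with h | h
    · exact absurd h hωne
    · exact (map_eq_zero (algebraMap (ZMod 2) F4)).mp h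
  by_contra hne
  exact hbin x hx hne hX
end

section
/- Let C be an F_2F_4-additive code such that C_X is not a binary LCD code and C_Y is an F_4-additive self-orthogonal code. Then C is not an ACD code (i.e., C ∩ C^⊥ ≠ {0}). -/
/-- If `C_X` is not a binary LCD code and `C_Y` is self-orthogonal over `F_4`,
then `C` is not an ACD code: `C ∩ C^⊥ ≠ {0}`. -/
theorem stmt_12 (α β : ℕ) (ω : F4) (hω : ω ^ 2 + ω + 1 = 0)
    (C : AddSubgroup ((Fin α → ZMod 2) × (Fin β → F4)))
    (hXnotlcd : ∃ a : Fin α → ZMod 2, a ≠ 0 ∧ (∃ b, (a, b) ∈ C) ∧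
      (∀ a' : Fin α → ZMod 2, (∃ b', (a', b') ∈ C) → ∑ i, a i * a' i = 0))
    (hYso : ∀ b b' : Fin β → F4, (∃ a, (a, b) ∈ C) → (∃ a', (a', b') ∈ C) →
      ∑ j, b j * b' j = 0) :
    ∃ x, x ≠ 0 ∧ x ∈ C ∧ (∀ u ∈ C, inner4 ω x u = 0) := by
  obtain ⟨a, ha0, ⟨b, hab⟩, horth⟩ := hXnotlcd
  refine ⟨(a, b), ?_, hab, ?_⟩
  · intro h
    exact ha0 (congrArg Prod.fst h)
  · rintro ⟨a', b'⟩ hu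
    unfold inner4
    have h1 : ∑ i, algebraMap (ZMod 2) F4 (a i * a' i) = 0 := by
      rw [← map_sum, horth a' ⟨b', hu⟩, map_zero]
    have h2 : ∑ j, b j * b' j = 0 := hYso b b' ⟨a, hab⟩ ⟨a', hu⟩
    simp only [h1, h2, mul_zero, add_zero]
end

section
/- Let C be an F_2F_4-additive code such that C_X is a binary self-orthogonal code, C_Y is an ACD code over F_4 (C_Y ∩ C_Y^⊥ = {0}), and the quaternary part b of every nonzero codeword (a|b) ∈ C is nonzero. Then C is an ACD code. -/
/-- If `C_X` is a binary self-orthogonal code, `C_Y` is an ACD code over `F_4`, and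
the quaternary part of every nonzero codeword of `C` is nonzero, then `C` is ACD. -/
theorem stmt_13 (α β : ℕ) (ω : F4) (hω : ω ^ 2 + ω + 1 = 0)
    (C : AddSubgroup ((Fin α → ZMod 2) × (Fin β → F4)))
    (hXso : ∀ a a' : Fin α → ZMod 2, (∃ b, (a, b) ∈ C) → (∃ b', (a', b') ∈ C) →
      ∑ i, a i * a' i = 0)
    (hYacd : ∀ b : Fin β → F4, (∃ a, (a, b) ∈ C) →
      (∀ b' : Fin β → F4, (∃ a', (a', b') ∈ C) → ∑ j, b j * b' j = 0) → b = 0)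
    (hquat : ∀ u ∈ C, u ≠ 0 → u.2 ≠ 0) :
    ∀ x ∈ C, (∀ u ∈ C, inner4 ω x u = 0) → x = 0 := by
  intro x hx hperp
  by_contra hne
  apply hquat x hx hne
  apply hYacd x.2 ⟨x.1, hx⟩
  intro b' ⟨a', hu⟩
  have h := hperp (a', b') hu
  have hX : ∑ i, x.1 i * a' i = 0 := hXso x.1 a' ⟨x.2, hx⟩ ⟨b', hu⟩
  have hz : ∑ i, algebraMap (ZMod 2) F4 (x.1 i * a' i) = 0 := by
    rw [← map_sum, hX, map_zero]
  rw [inner4, hz, mul_zero, zero_add] at h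
  exact h
end

section
/- Let C be an F_2F_4-additive code such that C_X is a binary self-orthogonal code and C_Y is not an ACD code over F_4. Then C is not an ACD code. -/
/-- If `C_X` is a binary self-orthogonal code and `C_Y` is not an ACD code over
`F_4`, then `C` is not an ACD code: `C ∩ C^⊥ ≠ {0}`. -/
theorem stmt_14 (α β : ℕ) (ω : F4) (hω : ω ^ 2 + ω + 1 = 0)
    (C : AddSubgroup ((Fin α → ZMod 2) × (Fin β → F4)))
    (hXso : ∀ a a' : Fin α → ZMod 2, (∃ b, (a, b) ∈ C) → (∃ b', (a', b') ∈ C) →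
      ∑ i, a i * a' i = 0)
    (hYnotacd : ∃ b : Fin β → F4, b ≠ 0 ∧ (∃ a, (a, b) ∈ C) ∧
      (∀ b' : Fin β → F4, (∃ a', (a', b') ∈ C) → ∑ j, b j * b' j = 0)) :
    ∃ x, x ≠ 0 ∧ x ∈ C ∧ (∀ u ∈ C, inner4 ω x u = 0) := by
  obtain ⟨b, hb0, ⟨a, hab⟩, hbperp⟩ := hYnotacd
  refine ⟨(a, b), ?_, hab, ?_⟩
  · intro h
    exact hb0 (congrArg Prod.snd h)
  · rintro ⟨c, d⟩ hu
    have h1 : ∑ i, a i * c i = 0 := hXso a c ⟨b, hab⟩ ⟨d, hu⟩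
    have h2 : ∑ j, b j * d j = 0 := hbperp d ⟨c, hu⟩
    simp only [inner4]
    rw [← map_sum, h1, h2]
    simp
end
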